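/- arXiv:1202.3428 — 6 statements merged into one kernel-verified Lean document; each statement's English description precedes it below -/
import Mathlib

section
/- Let N be coprime to b>1 and let d1, d2 be divisors of |b|_N with d1 | d2. If N has the Midy property for b and d1, then N has the Midy property for b and d2. -/
/-- The multiplicative order of `b` modulo `N`. -/
noncomputable def ord (b N : ℕ) : ℕ := orderOf (b : ZMod N)

/-- `N` has the Midy property for base `b` and `d` (where `|b|_N = k·d`):
`ν_p(N) ≤ ν_p(d)` for all primes `p` dividing `gcd(b^k − 1, N)`. -/
def HasMidy (b N d : ℕ) : Prop :=
  ∀ p : ℕ, p.Prime → p ∣ Nat.gcd (b ^ (ord b N / d) - 1) N →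
    padicValNat p N ≤ padicValNat p d

theorem stmt1 (b N d₁ d₂ : ℕ) (hb : 1 < b) (hN : 0 < N) (hco : Nat.Coprime N b)
    (hd₁ : 1 < d₁) (h₁ : d₁ ∣ ord b N) (h₂ : d₂ ∣ ord b N) (h₁₂ : d₁ ∣ d₂)
    (hm : HasMidy b N d₁) : HasMidy b N d₂ := by
  have : NeZero N := ⟨hN.ne'⟩
  have hu : IsUnit (b : ZMod N) := (ZMod.isUnit_iff_coprime b N).mpr hco.symm
  have hord : 0 < ord b N := by
    have := orderOf_pos hu.unit
    rw [show ord b N = orderOf hu.unit by rw [← orderOf_units, IsUnit.unit_spec]; rfl]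
    exact this
  have hd₂0 : d₂ ≠ 0 := by rintro rfl; simp [Nat.eq_zero_of_zero_dvd h₂] at hord
  intro p hp hdvd
  obtain ⟨c, hc⟩ := h₁₂
  obtain ⟨m, hm2⟩ := h₂
  have hd₁0 : d₁ ≠ 0 := by omega
  have hc0 : c ≠ 0 := by rintro rfl; simp at hc; omega
  have e₂ : ord b N / d₂ = m := by rw [hm2, Nat.mul_div_cancel_left _ (by positivity : 0 < d₂)]
  have e₁ : ord b N / d₁ = c * m := by
    rw [hm2, hc, mul_assoc, Nat.mul_div_cancel_left _ (by omega : 0 < d₁)]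
  have hpow : b ^ (ord b N / d₂) - 1 ∣ b ^ (ord b N / d₁) - 1 := by
    rw [e₁, e₂, mul_comm c m, pow_mul]
    simpa using Nat.sub_dvd_pow_sub_pow (b ^ m) 1 c
  have h1 : p ∣ Nat.gcd (b ^ (ord b N / d₁) - 1) N :=
    Nat.dvd_gcd ((Nat.dvd_gcd_iff.mp hdvd).1.trans hpow) (Nat.dvd_gcd_iff.mp hdvd).2
  have := hm p hp h1
  refine this.trans ?_
  haveI : Fact p.Prime := ⟨hp⟩
  rw [← padicValNat_dvd_iff_le hd₂0]
  exact (pow_padicValNat_dvd).trans ⟨c, hc⟩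
end

section
/- Let N be coprime to b>1 and q a prime divisor of |b|_N with gcd(N,q)=1. Then N has the Midy property for b and q if and only if ν_q(|b|_p) = ν_q(|b|_N) for every prime p dividing N. -/
lemma aux_val (q d e : ℕ) (hq : q.Prime) (he : 0 < e) (hqe : q ∣ e) (hde : d ∣ e) :
    ¬ d ∣ e / q ↔ padicValNat q d = padicValNat q e := by
  haveI : Fact q.Prime := ⟨hq⟩
  have hd0 : d ≠ 0 := fun h => by simp [h] at hde; omega
  have he0 : e ≠ 0 := he.ne'
  have hle : padicValNat q d ≤ padicValNat q e := by
    rw [← padicValNat_dvd_iff_le he0]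
    exact dvd_trans (pow_padicValNat_dvd) hde
  have ha1 : 1 ≤ padicValNat q e := one_le_padicValNat_of_dvd he0 hqe
  constructor
  · intro hnd
    by_contra hne
    have hlt : padicValNat q d < padicValNat q e := lt_of_le_of_ne hle hne
    obtain ⟨c, hc⟩ := hde
    have hc0 : c ≠ 0 := fun h => by simp [h, hc] at he0
    have hvc : 1 ≤ padicValNat q c := by
      have := padicValNat.mul (p := q) hd0 hc0
      rw [← hc] at this
      omega
    obtain ⟨c', hc'⟩ := dvd_of_one_le_padicValNat hvc
    apply hnd
    refine ⟨c', ?_⟩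
    have : e = q * (d * c') := by rw [hc, hc']; ring
    rw [this, Nat.mul_div_cancel_left _ hq.pos]
  · intro hv hdk
    have hk0 : e / q ≠ 0 := Nat.div_ne_zero_iff_of_dvd hqe |>.mpr ⟨he0, hq.ne_zero⟩
    have hmul : e / q * q = e := Nat.div_mul_cancel hqe
    have hvk : padicValNat q (e / q) + 1 = padicValNat q e := by
      have := padicValNat.mul (p := q) hk0 hq.ne_zero
      rw [hmul, padicValNat.self hq.one_lt] at this
      omega
    have : padicValNat q d ≤ padicValNat q (e / q) := by
      rw [← padicValNat_dvd_iff_le hk0]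
      exact dvd_trans (pow_padicValNat_dvd) hdk
    omega

theorem stmt2 (b N q : ℕ) (hb : 1 < b) (hN : 0 < N) (hco : Nat.Coprime N b)
    (hq : q.Prime) (hqo : q ∣ ord b N) (hqN : Nat.gcd N q = 1) :
    HasMidy b N q ↔
      ∀ p : ℕ, p.Prime → p ∣ N →
        padicValNat q (ord b p) = padicValNat q (ord b N) := by
  haveI : NeZero N := ⟨hN.ne'⟩
  have hu : IsUnit (b : ZMod N) := (ZMod.isUnit_iff_coprime b N).mpr hco.symm
  have he : 0 < ord b N := by
    obtain ⟨u, hu'⟩ := hu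
    unfold ord
    rw [← hu', orderOf_units]
    exact orderOf_pos u
  set e := ord b N with hedef
  set k := e / q with hkdef
  have hqnN : ¬ q ∣ N := fun h => hq.one_lt.ne' (Nat.dvd_one.mp (hqN ▸ Nat.dvd_gcd h dvd_rfl))
  -- divisibility of orders and equivalences for each prime p ∣ N
  have key : ∀ p : ℕ, p.Prime → p ∣ N →
      (p ∣ b ^ k - 1 ↔ ord b p ∣ k) := by
    intro p hp hpN
    haveI : Fact p.Prime := ⟨hp⟩
    have hbk : 1 ≤ b ^ k := Nat.one_le_pow _ _ (by omega)
    unfold ord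
    rw [orderOf_dvd_iff_pow_eq_one]
    rw [← ZMod.natCast_eq_zero_iff]
    rw [Nat.cast_sub hbk]
    push_cast
    constructor
    · intro h; linear_combination h
    · intro h; linear_combination h
  have hord_dvd : ∀ p : ℕ, p.Prime → p ∣ N → ord b p ∣ e := by
    intro p hp hpN
    haveI : Fact p.Prime := ⟨hp⟩
    have h1 : (b : ZMod N) ^ e = 1 := pow_orderOf_eq_one _
    have h2 : (b : ZMod p) ^ e = 1 := by
      have := congrArg (ZMod.castHom hpN (ZMod p)) h1
      rwa [map_pow, map_natCast, map_one] at this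
    exact orderOf_dvd_of_pow_eq_one h2
  constructor
  · intro hm p hp hpN
    rw [← aux_val q (ord b p) e hq he hqo (hord_dvd p hp hpN)]
    intro hdk
    have hpbk : p ∣ b ^ k - 1 := (key p hp hpN).mpr hdk
    have := hm p hp (Nat.dvd_gcd hpbk hpN)
    have hvq : padicValNat p q = 0 := padicValNat.eq_zero_of_not_dvd (by
      intro h
      rcases (Nat.prime_dvd_prime_iff_eq hp hq).mp h with rfl
      exact hqnN hpN)
    haveI : Fact p.Prime := ⟨hp⟩
    have := one_le_padicValNat_of_dvd hN.ne' hpN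
    omega
  · intro hr p hp hpg
    have hpbk : p ∣ b ^ k - 1 := hpg.trans (Nat.gcd_dvd_left _ _)
    have hpN : p ∣ N := hpg.trans (Nat.gcd_dvd_right _ _)
    have := (aux_val q (ord b p) e hq he hqo (hord_dvd p hp hpN)).mpr (hr p hp hpN)
    exact (this ((key p hp hpN).mp hpbk)).elim
end

section
/- Let N be coprime to b>1 and q a prime divisor of both |b|_N and N. Then N has the Midy property for b and q if and only if q^2 does not divide N and ν_q(|b|_p) = ν_q(|b|_N) for every prime p ≠ q dividing N. -/
/-- If `d ∣ k*q` with `q` prime and `ν_q d ≤ ν_q k`, then `d ∣ k`. -/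
lemma dvd_of_val_le {q d k : ℕ} (hq : q.Prime) (hd : d ≠ 0)
    (hdk : d ∣ k * q) (hval : padicValNat q d ≤ padicValNat q k) : d ∣ k := by
  haveI : Fact q.Prime := ⟨hq⟩
  set a := padicValNat q d with ha
  have hpow : q ^ a ∣ d := pow_padicValNat_dvd
  set m := d / q ^ a with hm
  have hdm : q ^ a * m = d := Nat.mul_div_cancel' hpow
  have hqm : ¬ q ∣ m := by
    intro h
    have : q ^ (a + 1) ∣ d := by
      rw [← hdm, pow_succ]
      exact mul_dvd_mul_left _ h
    exact pow_succ_padicValNat_not_dvd hd this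
  have hmk : m ∣ k := by
    have hmkq : m ∣ k * q := dvd_trans (Dvd.intro_left _ hdm) hdk
    exact Nat.Coprime.dvd_of_dvd_mul_right
      ((Nat.Prime.coprime_iff_not_dvd hq).2 hqm).symm hmkq
  have hqak : q ^ a ∣ k := dvd_trans (pow_dvd_pow q hval) pow_padicValNat_dvd
  have hcop : Nat.Coprime (q ^ a) m :=
    Nat.Coprime.pow_left _ ((Nat.Prime.coprime_iff_not_dvd hq).2 hqm)
  rw [← hdm]
  exact hcop.mul_dvd_of_dvd_of_dvd hqak hmk

theorem stmt3 (b N q : ℕ) (hb : 1 < b) (hN : 0 < N) (hco : Nat.Coprime N b)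
    (hq : q.Prime) (hqo : q ∣ ord b N) (hqN : q ∣ N) :
    HasMidy b N q ↔
      (¬ q ^ 2 ∣ N ∧
        ∀ p : ℕ, p.Prime → p ∣ N → p ≠ q →
          padicValNat q (ord b p) = padicValNat q (ord b N)) := by
  haveI : NeZero N := ⟨hN.ne'⟩
  haveI : Fact q.Prime := ⟨hq⟩
  set r := ord b N with hrdef
  -- r ≠ 0
  have hr0 : r ≠ 0 := by
    have hmod : b ^ N.totient ≡ 1 [MOD N] := Nat.ModEq.pow_totient hco.symm
    have hcast : ((b : ZMod N)) ^ N.totient = 1 := by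
      have := (ZMod.natCast_eq_natCast_iff _ _ _).2 hmod
      push_cast at this
      simpa using this
    have hdvd : r ∣ N.totient := orderOf_dvd_of_pow_eq_one hcast
    intro h
    rw [h] at hdvd
    exact (Nat.totient_pos.2 hN).ne' (Nat.eq_zero_of_zero_dvd hdvd)
  set k := r / q with hkdef
  have hrk : k * q = r := Nat.div_mul_cancel hqo
  have hk0 : k ≠ 0 := by
    intro h; rw [h, zero_mul] at hrk; exact hr0 hrk.symm
  have hvr : padicValNat q r = padicValNat q k + 1 := by
    rw [← hrk, padicValNat.mul hk0 hq.pos.ne', padicValNat.self hq.one_lt]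
  -- order modulo a prime divisor divides r
  have hordp : ∀ p : ℕ, p ∣ N → p ≠ 0 → ord b p ∣ r := by
    intro p hpN hp0
    haveI : NeZero p := ⟨hp0⟩
    have : (ZMod.castHom hpN (ZMod p)).toMonoidHom (b : ZMod N) = (b : ZMod p) := by
      simp [map_natCast]
    have h := orderOf_map_dvd (ZMod.castHom hpN (ZMod p)).toMonoidHom (b : ZMod N)
    rw [this] at h
    exact h
  -- p ∣ b^k - 1 ↔ ord b p ∣ k
  have hdvd_iff : ∀ p : ℕ, p ≠ 0 → (p ∣ b ^ k - 1 ↔ ord b p ∣ k) := by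
    intro p hp0
    haveI : NeZero p := ⟨hp0⟩
    have hb1 : 1 ≤ b ^ k := Nat.one_le_pow _ _ (lt_trans Nat.zero_lt_one hb)
    rw [ord, orderOf_dvd_iff_pow_eq_one]
    constructor
    · intro h
      have : ((b ^ k - 1 : ℕ) : ZMod p) = 0 := (ZMod.natCast_eq_zero_iff _ _).2 h
      rw [Nat.cast_sub hb1] at this
      push_cast at this
      exact sub_eq_zero.1 this
    · intro h
      rw [← ZMod.natCast_eq_zero_iff, Nat.cast_sub hb1]
      push_cast
      rw [h, sub_self]
  -- q divides b^k - 1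
  have hqbk : q ∣ b ^ k - 1 := by
    rw [hdvd_iff q hq.pos.ne']
    -- ord b q ∣ q - 1 so coprime to q, and ord b q ∣ k * q
    have hbq0 : (b : ZMod q) ≠ 0 := by
      rw [Ne, ZMod.natCast_eq_zero_iff]
      intro h
      have : q ∣ Nat.gcd N b := Nat.dvd_gcd hqN h
      rw [hco] at this
      exact hq.one_lt.ne' (Nat.eq_one_of_dvd_one this)
    have h1 : (b : ZMod q) ^ (q - 1) = 1 := ZMod.pow_card_sub_one_eq_one hbq0
    have hdq : ord b q ∣ q - 1 := orderOf_dvd_of_pow_eq_one h1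
    have hqnot : ¬ q ∣ ord b q := by
      intro h
      have h2 : q ∣ q - 1 := h.trans hdq
      have h3 := Nat.le_of_dvd (by have := hq.two_le; omega) h2
      have := hq.two_le
      omega
    have hcop : (ord b q).Coprime q := ((Nat.Prime.coprime_iff_not_dvd hq).2 hqnot).symm
    exact hcop.dvd_of_dvd_mul_right (hrk ▸ hordp q hqN hq.pos.ne')
  -- ν_q N ≤ 1 ↔ ¬ q ^ 2 ∣ N
  have hsq : ¬ q ^ 2 ∣ N ↔ padicValNat q N ≤ 1 := by
    rw [padicValNat_dvd_iff_le hN.ne']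
    omega
  -- key: for p prime ≠ q dividing N: ¬ ord b p ∣ k ↔ ν_q (ord b p) = ν_q r
  have hkey : ∀ p : ℕ, p.Prime → p ∣ N → (¬ ord b p ∣ k ↔ padicValNat q (ord b p) = padicValNat q r) := by
    intro p hp hpN
    have hop : ord b p ∣ r := hordp p hpN hp.pos.ne'
    have hop0 : ord b p ≠ 0 := fun h => hr0 (Nat.eq_zero_of_zero_dvd (h ▸ hop))
    have hle : padicValNat q (ord b p) ≤ padicValNat q r := by
      have : q ^ padicValNat q (ord b p) ∣ r := dvd_trans pow_padicValNat_dvd hop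
      exact (padicValNat_dvd_iff_le hr0).1 this
    constructor
    · intro hnd
      have : ¬ padicValNat q (ord b p) ≤ padicValNat q k := by
        intro hle'
        exact hnd (dvd_of_val_le hq hop0 (hrk ▸ hop) hle')
      omega
    · intro heq hdk
      have : q ^ padicValNat q (ord b p) ∣ k := dvd_trans pow_padicValNat_dvd hdk
      have := (padicValNat_dvd_iff_le hk0).1 this
      omega
  constructor
  · intro H
    constructor
    · rw [hsq]
      have := H q hq (Nat.dvd_gcd hqbk hqN)
      rwa [padicValNat.self hq.one_lt] at this
    · intro p hp hpN hpq
      rw [← hkey p hp hpN]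
      intro hdk
      have hpbk : p ∣ b ^ k - 1 := (hdvd_iff p hp.pos.ne').2 hdk
      have := H p hp (Nat.dvd_gcd hpbk hpN)
      have hz : padicValNat p q = 0 := by
        apply padicValNat.eq_zero_of_not_dvd
        intro h
        rcases (Nat.Prime.eq_one_or_self_of_dvd hq p h) with h1 | h1
        · exact hp.one_lt.ne' h1
        · exact hpq h1
      rw [hz] at this
      haveI : Fact p.Prime := ⟨hp⟩
      have := one_le_padicValNat_of_dvd hN.ne' hpN
      omega
  · rintro ⟨h1, h2⟩ p hp hpg
    have hpbk : p ∣ b ^ k - 1 := hpg.trans (Nat.gcd_dvd_left _ _)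
    have hpN : p ∣ N := hpg.trans (Nat.gcd_dvd_right _ _)
    by_cases hpq : p = q
    · subst hpq
      rw [padicValNat.self hp.one_lt]
      exact hsq.1 h1
    · exfalso
      have := (hkey p hp hpN).2 (h2 p hp hpN hpq)
      exact this ((hdvd_iff p hp.pos.ne').1 hpbk)
end

section
/- An odd composite integer N coprime to b is a strong pseudoprime to base b if and only if N is a Fermat pseudoprime to base b and there exists a non-negative integer k such that ν_2(|b|_{p^{ν_p(N)}}) = ν_2(|b|_p) = k for every prime p dividing N. -/
/-- The strong pseudoprimality *condition*: writing `N − 1 = 2^r·s` with `s` odd,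
`b^s ≡ 1 (mod N)` or `b^{2^i·s} ≡ −1 (mod N)` for some `0 ≤ i < r`. -/
def StrongCond (b N : ℕ) : Prop :=
  b ^ ((N - 1) / 2 ^ padicValNat 2 (N - 1)) ≡ 1 [MOD N] ∨
    ∃ i < padicValNat 2 (N - 1),
      (b : ZMod N) ^ (2 ^ i * ((N - 1) / 2 ^ padicValNat 2 (N - 1))) = -1

section helpers

lemma aux_order_pos {m b : ℕ} [NeZero m] (h : b.Coprime m) :
    0 < orderOf (b : ZMod m) := by
  obtain ⟨u, hu⟩ := (ZMod.isUnit_iff_coprime b m).mpr h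
  rw [← hu, orderOf_units]
  exact orderOf_pos u

lemma aux_modeq_iff {m b t : ℕ} :
    b ^ t ≡ 1 [MOD m] ↔ orderOf (b : ZMod m) ∣ t := by
  rw [← ZMod.natCast_eq_natCast_iff, Nat.cast_one, Nat.cast_pow, ← orderOf_dvd_iff_pow_eq_one]

lemma aux_nu_le {d j s : ℕ} (hs : Odd s) (h : d ∣ 2 ^ j * s) :
    padicValNat 2 d ≤ j := by
  have hs2 : ¬ 2 ∣ s := by rcases hs with ⟨c, rfl⟩; omega
  have h2 : 2 ^ padicValNat 2 d ∣ 2 ^ j * s := (Nat.ordProj_dvd d 2).trans h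
  have hco : Nat.Coprime (2 ^ padicValNat 2 d) s :=
    Nat.Coprime.pow_left _ ((Nat.Prime.coprime_iff_not_dvd Nat.prime_two).mpr hs2)
  exact (Nat.pow_dvd_pow_iff_le_right one_lt_two).mp (hco.dvd_of_dvd_mul_right h2)

lemma aux_dvd_shift {d j s : ℕ} (hd : d ≠ 0) (hs : Odd s) (h : d ∣ 2 ^ j * s) :
    d ∣ 2 ^ padicValNat 2 d * s := by
  have hs2 : ¬ 2 ∣ d / 2 ^ padicValNat 2 d := Nat.not_dvd_ordCompl Nat.prime_two hd
  have hdd : d / 2 ^ padicValNat 2 d ∣ 2 ^ j * s :=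
    (Nat.ordCompl_dvd d 2).trans h
  have hco : Nat.Coprime (d / 2 ^ padicValNat 2 d) (2 ^ j) :=
    Nat.Coprime.pow_right _
      (((Nat.Prime.coprime_iff_not_dvd Nat.prime_two).mpr hs2).symm)
  have hds : d / 2 ^ padicValNat 2 d ∣ s := hco.dvd_of_dvd_mul_left hdd
  calc d = 2 ^ padicValNat 2 d * (d / 2 ^ padicValNat 2 d) :=
        (Nat.ordProj_mul_ordCompl_eq_self d 2).symm
    _ ∣ 2 ^ padicValNat 2 d * s := mul_dvd_mul_left _ hds

/-- If `x^(2^i s) = -1` mod `m` (with `m > 2`, `s` odd), then `ν₂(ord x) = i+1`. -/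
lemma aux_nu_eq {m b i s : ℕ} (hm : 2 < m) (hs : Odd s) (hb : b.Coprime m)
    (h : (b : ZMod m) ^ (2 ^ i * s) = -1) :
    padicValNat 2 (orderOf (b : ZMod m)) = i + 1 := by
  haveI : NeZero m := ⟨by omega⟩
  haveI : Fact (2 < m) := ⟨hm⟩
  set d := orderOf (b : ZMod m) with hdd
  have hd0 : d ≠ 0 := (aux_order_pos hb).ne'
  have hsq : (b : ZMod m) ^ (2 ^ (i + 1) * s) = 1 := by
    have : 2 ^ (i + 1) * s = 2 ^ i * s * 2 := by ring
    rw [this, pow_mul, h]; ring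
  have hdvd : d ∣ 2 ^ (i + 1) * s := orderOf_dvd_of_pow_eq_one hsq
  have hle : padicValNat 2 d ≤ i + 1 := aux_nu_le hs hdvd
  rcases Nat.lt_or_ge (padicValNat 2 d) (i + 1) with hlt | hge
  · exfalso
    have hds : d ∣ 2 ^ i * s := by
      have h1 : d ∣ 2 ^ padicValNat 2 d * s := aux_dvd_shift hd0 hs hdvd
      exact h1.trans (mul_dvd_mul_right (pow_dvd_pow 2 (by omega)) s)
    have : (b : ZMod m) ^ (2 ^ i * s) = 1 := orderOf_dvd_iff_pow_eq_one.mp hds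
    rw [h] at this
    exact ZMod.neg_one_ne_one this
  · omega

/-- In `ZMod (p^e)` with `p` an odd prime, `x² = 1` implies `x = ±1`. -/
lemma aux_sq_cases {p e : ℕ} (hp : p.Prime) (hp2 : p ≠ 2) (he : e ≠ 0)
    {x : ZMod (p ^ e)} (h : x ^ 2 = 1) : x = 1 ∨ x = -1 := by
  haveI : NeZero (p ^ e) := ⟨pow_ne_zero _ hp.pos.ne'⟩
  set y : ℤ := (x.val : ℤ) with hy
  have hyx : ((y : ℤ) : ZMod (p ^ e)) = x := by
    rw [hy, Int.cast_natCast, ZMod.natCast_rightInverse x]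
  have hdvd : ((p : ℤ)) ^ e ∣ (y - 1) * (y + 1) := by
    have h0 : (((y - 1) * (y + 1) : ℤ) : ZMod (p ^ e)) = 0 := by
      push_cast [hyx]
      have : (x - 1) * (x + 1) = x ^ 2 - 1 := by ring
      rw [this, h, sub_self]
    rw [ZMod.intCast_zmod_eq_zero_iff_dvd] at h0
    simpa using h0
  have hpz : Prime (p : ℤ) := Nat.prime_iff_prime_int.mp hp
  have hpd : (p : ℤ) ∣ (y - 1) * (y + 1) := (dvd_pow_self _ he).trans hdvd
  have hpodd : ¬ ((p : ℤ) ∣ 2) := by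
    intro hd
    have : (p : ℤ) ∣ ((2 : ℕ) : ℤ) := by exact_mod_cast hd
    have h2 := Int.natCast_dvd_natCast.mp this
    exact hp2 ((Nat.prime_dvd_prime_iff_eq hp Nat.prime_two).mp h2)
  rcases hpz.dvd_mul.mp hpd with h1 | h1
  · left
    have hnd : ¬ ((p : ℤ) ∣ (y + 1)) := by
      intro h2
      exact hpodd (by have := dvd_sub h2 h1; simpa using this)
    have hcop : IsCoprime ((p : ℤ) ^ e) (y + 1) :=
      ((hpz.coprime_iff_not_dvd).mpr hnd).pow_left
    have : ((p : ℤ)) ^ e ∣ y - 1 := hcop.dvd_of_dvd_mul_right hdvd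
    have h0 : ((y - 1 : ℤ) : ZMod (p ^ e)) = 0 := by
      rw [ZMod.intCast_zmod_eq_zero_iff_dvd]; exact_mod_cast this
    push_cast [hyx] at h0
    linear_combination h0
  · right
    have hnd : ¬ ((p : ℤ) ∣ (y - 1)) := by
      intro h2
      exact hpodd (by have := dvd_sub h1 h2; simpa using this)
    have hcop : IsCoprime ((p : ℤ) ^ e) (y - 1) :=
      ((hpz.coprime_iff_not_dvd).mpr hnd).pow_left
    have : ((p : ℤ)) ^ e ∣ y + 1 := by
      have := hcop.dvd_of_dvd_mul_right (by rwa [mul_comm] at hdvd)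
      exact this
    have h0 : ((y + 1 : ℤ) : ZMod (p ^ e)) = 0 := by
      rw [ZMod.intCast_zmod_eq_zero_iff_dvd]; exact_mod_cast this
    push_cast [hyx] at h0
    linear_combination h0

lemma aux_dvd_of_prime_pow {N X : ℕ} (hN : N ≠ 0) (hX : X ≠ 0)
    (h : ∀ p, p.Prime → p ∣ N → p ^ N.factorization p ∣ X) : N ∣ X := by
  rw [← Nat.factorization_le_iff_dvd hN hX]
  intro p
  by_cases hp : p.Prime ∧ p ∣ N
  · exact (Nat.Prime.pow_dvd_iff_le_factorization hp.1 hX).mp (h p hp.1 hp.2)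
  · rw [not_and_or] at hp
    rcases hp with hp | hp
    · simp [Nat.factorization_eq_zero_of_not_prime _ hp]
    · simp [Nat.factorization_eq_zero_of_not_dvd hp]

end helpers

theorem stmt4 (b N : ℕ) (hodd : Odd N) (hN : 1 < N) (hcomp : ¬ N.Prime)
    (hco : Nat.Coprime b N) :
    StrongCond b N ↔
      (b ^ (N - 1) ≡ 1 [MOD N] ∧
        ∃ k : ℕ, ∀ p : ℕ, p.Prime → p ∣ N →
          padicValNat 2 (ord b (p ^ (N.factorization p))) = k ∧
            padicValNat 2 (ord b p) = k) := by
  simp only [ord, StrongCond]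
  set r := padicValNat 2 (N - 1) with hr
  set s := (N - 1) / 2 ^ r with hs
  have hN0 : N ≠ 0 := by omega
  have hN1 : N - 1 ≠ 0 := by omega
  have hrs : 2 ^ r * s = N - 1 := Nat.ordProj_mul_ordCompl_eq_self (N - 1) 2
  have hsodd : Odd s := by
    have h2 : ¬ 2 ∣ s := Nat.not_dvd_ordCompl Nat.prime_two hN1
    exact Nat.odd_iff.mpr (by omega)
  have hN2 : ¬ 2 ∣ N := by rcases hodd with ⟨c, rfl⟩; omega
  -- facts for a prime p dividing N
  have pfacts : ∀ p : ℕ, p.Prime → p ∣ N →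
      p ≠ 2 ∧ 2 < p ∧ N.factorization p ≠ 0 ∧ p ^ N.factorization p ∣ N ∧
        2 < p ^ N.factorization p := by
    intro p hp hdvd
    have hp2 : p ≠ 2 := by rintro rfl; exact hN2 hdvd
    have hplt : 2 < p := lt_of_le_of_ne hp.two_le (Ne.symm hp2)
    have he : N.factorization p ≠ 0 := (hp.factorization_pos_of_dvd hN0 hdvd).ne'
    have hpe : p ^ N.factorization p ∣ N := Nat.ordProj_dvd N p
    exact ⟨hp2, hplt, he, hpe, lt_of_lt_of_le hplt (Nat.le_self_pow he p)⟩
  constructor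
  · rintro (h1 | ⟨i, hi, h2⟩)
    · constructor
      · have := h1.pow (2 ^ r)
        rwa [← pow_mul, one_pow, mul_comm, hrs] at this
      · refine ⟨0, fun p hp hdvd => ?_⟩
        obtain ⟨hp2, hplt, he, hpe, hpe2⟩ := pfacts p hp hdvd
        have key : ∀ m : ℕ, m ∣ N → padicValNat 2 (orderOf (b : ZMod m)) = 0 := by
          intro m hm
          have hds : orderOf (b : ZMod m) ∣ s := aux_modeq_iff.mp (h1.of_dvd hm)
          have hnd : ¬ 2 ∣ orderOf (b : ZMod m) := by
            intro h2d
            have h2s : 2 ∣ s := h2d.trans hds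
            have := Nat.odd_iff.mp hsodd
            omega
          exact padicValNat.eq_zero_of_not_dvd hnd
        exact ⟨key _ hpe, key p hdvd⟩
    · have hir : i + 1 ≤ r := hi
      have hsq : (b : ZMod N) ^ (2 ^ (i + 1) * s) = 1 := by
        have hexp : 2 ^ (i + 1) * s = 2 ^ i * s * 2 := by ring
        rw [hexp, pow_mul, h2]; ring
      constructor
      · have hNm : N - 1 = 2 ^ (i + 1) * s * 2 ^ (r - (i + 1)) := by
          rw [← hrs, mul_right_comm, ← pow_add]
          congr 2
          omega
        have hone : (b : ZMod N) ^ (N - 1) = 1 := by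
          rw [hNm, pow_mul, hsq, one_pow]
        exact aux_modeq_iff.mpr (orderOf_dvd_of_pow_eq_one hone)
      · refine ⟨i + 1, fun p hp hdvd => ?_⟩
        obtain ⟨hp2, hplt, he, hpe, hpe2⟩ := pfacts p hp hdvd
        have key : ∀ m : ℕ, m ∣ N → 2 < m → b.Coprime m →
            padicValNat 2 (orderOf (b : ZMod m)) = i + 1 := by
          intro m hm hm2 hbm
          have hcast : (b : ZMod m) ^ (2 ^ i * s) = -1 := by
            have hcg := congrArg (ZMod.castHom hm (ZMod m)) h2
            rw [map_pow, map_natCast, map_neg, map_one] at hcg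
            exact hcg
          exact aux_nu_eq hm2 hsodd hbm hcast
        exact ⟨key _ hpe hpe2 (hco.coprime_dvd_right hpe),
          key p hdvd hplt (hco.coprime_dvd_right hdvd)⟩
  · rintro ⟨hferm, k, hk⟩
    have hb0 : b ≠ 0 := by
      rintro rfl
      rw [Nat.coprime_zero_left] at hco
      omega
    have hdN : ∀ m : ℕ, m ∣ N → orderOf (b : ZMod m) ∣ 2 ^ r * s := by
      intro m hm
      rw [hrs]
      exact aux_modeq_iff.mp (hferm.of_dvd hm)
    by_cases hk0 : k = 0
    · subst hk0
      left
      have key : ∀ p, p.Prime → p ∣ N → p ^ N.factorization p ∣ b ^ s - 1 := by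
        intro p hp hdvd
        obtain ⟨hp2, hplt, he, hpe, hpe2⟩ := pfacts p hp hdvd
        set m := p ^ N.factorization p with hm
        haveI : NeZero m := ⟨by omega⟩
        have hdpos : orderOf (b : ZMod m) ≠ 0 :=
          (aux_order_pos (hco.coprime_dvd_right hpe)).ne'
        have hds : orderOf (b : ZMod m) ∣ s := by
          have := aux_dvd_shift hdpos hsodd (hdN m hpe)
          rwa [(hk p hp hdvd).1, pow_zero, one_mul] at this
        have hmod : b ^ s ≡ 1 [MOD m] := aux_modeq_iff.mpr hds
        exact (Nat.modEq_iff_dvd' (Nat.one_le_pow _ _ (by omega))).mp hmod.symm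
      have hdv : N ∣ b ^ s - 1 := by
        rcases Nat.eq_zero_or_pos (b ^ s - 1) with h0 | h0
        · simp [h0]
        · exact aux_dvd_of_prime_pow hN0 h0.ne' key
      exact ((Nat.modEq_iff_dvd' (Nat.one_le_pow _ _ (by omega))).mpr hdv).symm
    · right
      obtain ⟨q, hq, hqd⟩ := Nat.exists_prime_and_dvd (show N ≠ 1 by omega)
      have hkr : k ≤ r := by
        obtain ⟨hq2, hqlt, hqe, hqpe, hqpe2⟩ := pfacts q hq hqd
        have := aux_nu_le hsodd (hdN _ hqpe)
        rwa [(hk q hq hqd).1] at this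
      refine ⟨k - 1, by omega, ?_⟩
      set t := 2 ^ (k - 1) * s with ht
      have key : ∀ p, p.Prime → p ∣ N → p ^ N.factorization p ∣ b ^ t + 1 := by
        intro p hp hdvd
        obtain ⟨hp2, hplt, he, hpe, hpe2⟩ := pfacts p hp hdvd
        haveI : NeZero (p ^ N.factorization p) := ⟨by omega⟩
        set x : ZMod (p ^ N.factorization p) := (b : ZMod (p ^ N.factorization p)) with hx
        have hdpos : orderOf x ≠ 0 := (aux_order_pos (hco.coprime_dvd_right hpe)).ne'
        have hnu : padicValNat 2 (orderOf x) = k := (hk p hp hdvd).1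
        have hdks : orderOf x ∣ 2 ^ k * s := by
          have := aux_dvd_shift hdpos hsodd (hdN _ hpe)
          rwa [hnu] at this
        have hsq : (x ^ t) ^ 2 = 1 := by
          rw [← pow_mul]
          have hexp : t * 2 = 2 ^ k * s := by
            rw [ht]
            have : 2 ^ (k - 1) * 2 = 2 ^ k := by
              rw [← pow_succ]
              congr 1
              omega
            calc 2 ^ (k - 1) * s * 2 = 2 ^ (k - 1) * 2 * s := by ring
              _ = 2 ^ k * s := by rw [this]
          rw [hexp]
          exact orderOf_dvd_iff_pow_eq_one.mp hdks
        have hne : x ^ t ≠ 1 := by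
          intro h1
          have hdt : orderOf x ∣ 2 ^ (k - 1) * s := by
            rw [← ht]; exact orderOf_dvd_of_pow_eq_one h1
          have := aux_nu_le hsodd hdt
          omega
        rcases aux_sq_cases hp hp2 he hsq with h | h
        · exact absurd h hne
        · have h0 : ((b ^ t + 1 : ℕ) : ZMod (p ^ N.factorization p)) = 0 := by
            push_cast
            rw [← hx, h]
            ring
          exact (ZMod.natCast_eq_zero_iff _ _).mp h0
      have hdv : N ∣ b ^ t + 1 :=
        aux_dvd_of_prime_pow hN0 (by positivity) key
      have h0 : ((b ^ t + 1 : ℕ) : ZMod N) = 0 :=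
        (ZMod.natCast_eq_zero_iff _ _).mpr hdv
      push_cast at h0
      linear_combination h0
end

section
/- If N is a positive integer coprime to b>1 such that N has the Midy property for b and every divisor d>1 of |b|_N, then gcd(N, |b|_N) is either 1 or a prime. -/
theorem stmt5 (b N : ℕ) (hb : 1 < b) (hN : 0 < N) (hco : Nat.Coprime N b)
    (h : ∀ d : ℕ, 1 < d → d ∣ ord b N → HasMidy b N d) :
    Nat.gcd N (ord b N) = 1 ∨ (Nat.gcd N (ord b N)).Prime := by
  haveI : NeZero N := ⟨hN.ne'⟩
  set e := ord b N with he
  set g := Nat.gcd N e with hg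
  have hgN : g ∣ N := Nat.gcd_dvd_left _ _
  have hge : g ∣ e := Nat.gcd_dvd_right _ _
  -- key: for primes p q with p ∣ N, q ∣ e, q ∤ orderOf (b : ZMod p),
  -- we get p ∣ b ^ (e / q) - 1
  have key : ∀ p q : ℕ, p.Prime → q.Prime → p ∣ N → q ∣ e →
      ¬ q ∣ orderOf (b : ZMod p) → p ∣ b ^ (e / q) - 1 := by
    intro p q hp hq hpN hqe hqf
    haveI : Fact p.Prime := ⟨hp⟩
    have hfe : orderOf (b : ZMod p) ∣ e := by
      apply orderOf_dvd_of_pow_eq_one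
      have h1 : (b : ZMod N) ^ e = 1 := by rw [he, ord]; exact pow_orderOf_eq_one _
      have h2 : N ∣ b ^ e - 1 := by
        have := (ZMod.natCast_eq_natCast_iff (b ^ e) 1 N).mp (by push_cast; exact h1)
        exact (Nat.modEq_iff_dvd' (Nat.one_le_pow _ _ (by omega))).mp this.symm
      have := (Nat.modEq_iff_dvd' (Nat.one_le_pow _ _ (by omega))).mpr (dvd_trans hpN h2)
      have h4 : ((b : ZMod p)) ^ e = 1 := by
        have := (ZMod.natCast_eq_natCast_iff 1 (b ^ e) p).mpr this
        push_cast at this; exact this.symm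
      exact h4
    have hfq : orderOf (b : ZMod p) ∣ e / q := by
      have hco' : Nat.Coprime (orderOf (b : ZMod p)) q :=
        ((Nat.Prime.coprime_iff_not_dvd hq).mpr hqf).symm
      have : orderOf (b : ZMod p) ∣ q * (e / q) := by
        rwa [Nat.mul_div_cancel' hqe]
      exact hco'.dvd_of_dvd_mul_left this
    have h5 : ((b : ZMod p)) ^ (e / q) = 1 := (orderOf_dvd_iff_pow_eq_one).mp hfq
    have h6 := (ZMod.natCast_eq_natCast_iff (b ^ (e/q)) 1 p).mp (by push_cast; exact h5)
    exact (Nat.modEq_iff_dvd' (Nat.one_le_pow _ _ (by omega))).mp h6.symm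
  by_cases hg1 : g = 1
  · exact Or.inl hg1
  right
  by_contra hgp
  set p := g.minFac with hp
  have hpp : p.Prime := Nat.minFac_prime hg1
  have hpg : p ∣ g := Nat.minFac_dvd g
  have hpN : p ∣ N := hpg.trans hgN
  have hpe : p ∣ e := hpg.trans hge
  haveI : Fact p.Prime := ⟨hpp⟩
  have hbp : (b : ZMod p) ≠ 0 := by
    intro h0
    have h1 : p ∣ b := (ZMod.natCast_eq_zero_iff b p).mp h0
    have h2 : p ∣ Nat.gcd N b := Nat.dvd_gcd hpN h1
    rw [hco] at h2
    have := Nat.le_of_dvd one_pos h2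
    have := hpp.two_le
    omega
  have hfp1 : orderOf (b : ZMod p) ∣ p - 1 := ZMod.orderOf_dvd_card_sub_one hbp
  have hfpos : 0 < orderOf (b : ZMod p) := by
    rcases Nat.eq_zero_or_pos (orderOf (b : ZMod p)) with h0 | h0
    · rw [h0] at hfp1
      have := Nat.eq_zero_of_zero_dvd hfp1
      have := hpp.two_le
      omega
    · exact h0
  have hfle : orderOf (b : ZMod p) ≤ p - 1 := Nat.le_of_dvd (by have := hpp.two_le; omega) hfp1
  have hvN1 : 1 ≤ padicValNat p N := one_le_padicValNat_of_dvd hN.ne' hpN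
  by_cases hq : ∃ q : ℕ, q.Prime ∧ q ∣ g ∧ q ≠ p
  · obtain ⟨q, hqp, hqg, hqne⟩ := hq
    have hqe : q ∣ e := hqg.trans hge
    have hpq : p ≤ q := Nat.minFac_le_of_dvd hqp.two_le hqg
    have hqf : ¬ q ∣ orderOf (b : ZMod p) := by
      intro hd
      have := Nat.le_of_dvd hfpos hd
      have := hpp.two_le
      omega
    have hdvd := key p q hpp hqp hpN hqe hqf
    have hmid := h q hqp.one_lt hqe p hpp (Nat.dvd_gcd hdvd hpN)
    rw [padicValNat.eq_zero_of_not_dvd (fun hd => hqne ((Nat.prime_dvd_prime_iff_eq hpp hqp).mp hd).symm)] at hmid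
    omega
  · push_neg at hq
    -- every prime factor of g is p; g is not prime so p^2 ∣ g
    have hgp' : g / p ≠ 1 := by
      intro h1
      apply hgp
      have : g = p := by
        have := Nat.div_mul_cancel hpg
        rw [h1, one_mul] at this
        omega
      rw [this]; exact hpp
    have hr : (g / p).minFac ∣ g / p := Nat.minFac_dvd _
    have hrg : (g / p).minFac ∣ g := hr.trans (Nat.div_dvd_of_dvd hpg)
    have hrp : (g / p).minFac = p := hq _ (Nat.minFac_prime hgp') hrg
    have hp2 : p ^ 2 ∣ g := by
      have : p ∣ g / p := by simpa [hrp] using hr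
      obtain ⟨c, hc⟩ := this
      have := Nat.div_mul_cancel hpg
      refine ⟨c, ?_⟩
      nlinarith [this, hc]
    have hv2 : 2 ≤ padicValNat p N := by
      rw [← padicValNat_dvd_iff_le hN.ne']
      exact hp2.trans hgN
    have hpf : ¬ p ∣ orderOf (b : ZMod p) := by
      intro hd
      have := Nat.le_of_dvd hfpos hd
      have := hpp.two_le
      omega
    have hdvd := key p p hpp hpp hpN hpe hpf
    have hmid := h p hpp.one_lt hpe p hpp (Nat.dvd_gcd hdvd hpN)
    rw [padicValNat.self hpp.one_lt] at hmid
    omega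
end

section
/- Let N be coprime to b>1 with gcd(N, |b|_N) = 1. Then N has the Midy property for b and every divisor d>1 of |b|_N if and only if |b|_N = |b|_p for every prime p dividing N. -/
private lemma mod_helper {m b k : ℕ} (hb : 1 ≤ b) :
    (b : ZMod m) ^ k = 1 ↔ m ∣ b ^ k - 1 := by
  have h1 : 1 ≤ b ^ k := Nat.one_le_pow _ _ hb
  rw [← Nat.cast_pow, show (1 : ZMod m) = ((1 : ℕ) : ZMod m) by simp,
    ZMod.natCast_eq_natCast_iff]
  constructor
  · intro h; exact (Nat.modEq_iff_dvd' h1).mp h.symm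
  · intro h; exact ((Nat.modEq_iff_dvd' h1).mpr h).symm

private lemma ord_pos {b N : ℕ} (hb : 1 ≤ b) (hN : 0 < N) (h : Nat.Coprime N b) :
    0 < ord b N := by
  have ht : b ^ N.totient ≡ 1 [MOD N] := Nat.ModEq.pow_totient h.symm
  have h2 : (b : ZMod N) ^ N.totient = 1 :=
    (mod_helper hb).mpr ((Nat.modEq_iff_dvd' (Nat.one_le_pow _ _ hb)).mp ht.symm)
  exact Nat.pos_of_dvd_of_pos (orderOf_dvd_of_pow_eq_one h2) (Nat.totient_pos.mpr hN)

private lemma ord_dvd {b p N : ℕ} (hb : 1 ≤ b) (hpN : p ∣ N) :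
    ord b p ∣ ord b N := by
  have h1 : (b : ZMod N) ^ ord b N = 1 := pow_orderOf_eq_one _
  have h3 : p ∣ b ^ ord b N - 1 := dvd_trans hpN ((mod_helper hb).mp h1)
  exact orderOf_dvd_of_pow_eq_one ((mod_helper hb).mpr h3)

theorem stmt6 (b N : ℕ) (hb : 1 < b) (hN : 0 < N) (hco : Nat.Coprime N b)
    (hg : Nat.gcd N (ord b N) = 1) :
    (∀ d : ℕ, 1 < d → d ∣ ord b N → HasMidy b N d) ↔
      (∀ p : ℕ, p.Prime → p ∣ N → ord b N = ord b p) := by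
  have hb1 : 1 ≤ b := hb.le
  have he : 0 < ord b N := ord_pos hb1 hN hco
  constructor
  · intro H p hp hpN
    have hpb : Nat.Coprime p b := hco.coprime_dvd_left hpN
    have hp0 : 0 < p := hp.pos
    have hm : 0 < ord b p := ord_pos hb1 hp0 hpb
    have hmd : ord b p ∣ ord b N := ord_dvd hb1 hpN
    by_contra hne
    set m := ord b p with hmdef
    have hmlt : m < ord b N :=
      lt_of_le_of_ne (Nat.le_of_dvd he hmd) (fun h => hne h.symm)
    set d := ord b N / m with hddef
    have hdd : d ∣ ord b N := Nat.div_dvd_of_dvd hmd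
    have hed : ord b N = m * d := (Nat.mul_div_cancel' hmd).symm
    have hd1 : 1 < d := by
      rcases Nat.lt_or_ge d 2 with h | h
      · interval_cases d
        · omega
        · omega
      · omega
    have hkm : ord b N / d = m := Nat.div_div_self hmd he.ne'
    have hpk : p ∣ b ^ (ord b N / d) - 1 := by
      rw [hkm]
      exact (mod_helper hb1).mp (pow_orderOf_eq_one _)
    have hmidy := H d hd1 hdd p hp (Nat.dvd_gcd hpk hpN)
    haveI : Fact p.Prime := ⟨hp⟩
    have h1 : 1 ≤ padicValNat p N := one_le_padicValNat_of_dvd hN.ne' hpN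
    have hpd : p ∣ d := dvd_of_one_le_padicValNat (le_trans h1 hmidy)
    have hpe : p ∣ ord b N := hpd.trans hdd
    have : p ∣ Nat.gcd N (ord b N) := Nat.dvd_gcd hpN hpe
    rw [hg] at this
    exact hp.one_lt.ne' (Nat.eq_one_of_dvd_one this)
  · intro H d hd1 hdd p hp hpg
    have hpk : p ∣ b ^ (ord b N / d) - 1 := dvd_trans hpg (Nat.gcd_dvd_left _ _)
    have hpN : p ∣ N := dvd_trans hpg (Nat.gcd_dvd_right _ _)
    have hordp : ord b N = ord b p := H p hp hpN
    have hdvd : ord b p ∣ ord b N / d :=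
      orderOf_dvd_of_pow_eq_one ((mod_helper hb1).mpr hpk)
    rw [← hordp] at hdvd
    have hkpos : 0 < ord b N / d := Nat.div_pos (Nat.le_of_dvd he hdd) (by omega)
    have hklt : ord b N / d < ord b N := Nat.div_lt_self he hd1
    exact absurd (Nat.le_of_dvd hkpos hdvd) (by omega)
end
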